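/- There is a constant c₂ (not depending on e^{Q_n} and n) such that: if V_n ∈ L_n(m,M) with m = (2(1+e^{Q_n}))^{−1} and M = q²/2, and n is sufficiently large, then the maximum absolute row sum norm of the inverse satisfies ‖V_n^{−1}‖_∞ ≤ c₂(1+e^{Q_n})³/(n−1). -/

import Mathlib

open Finset
open Matrix

/-- The matrix class `L_n(m, M)`: symmetric nonnegative matrices whose diagonal entries equal
the corresponding off-diagonal row sums, with all off-diagonal entries in `[m, M]`. -/
def MatrixClassL (n : ℕ) (m M : ℝ) (V : Matrix (Fin n) (Fin n) ℝ) : Prop :=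
  V.IsSymm ∧ (∀ i, V i i = ∑ j ∈ Finset.univ.erase i, V i j) ∧
    ∀ i j, i ≠ j → m ≤ V i j ∧ V i j ≤ M


private lemma sum_erase_comm {n : ℕ} (f : Fin n → Fin n → ℝ) :
    ∑ i, ∑ j ∈ Finset.univ.erase i, f i j = ∑ j, ∑ i ∈ Finset.univ.erase j, f i j := by
  have h1 : ∀ i : Fin n, ∑ j ∈ Finset.univ.erase i, f i j = (∑ j, f i j) - f i i :=
    fun i => Finset.sum_erase_eq_sub (Finset.mem_univ i)
  have h2 : ∀ j : Fin n, ∑ i ∈ Finset.univ.erase j, f i j = (∑ i, f i j) - f j j :=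
    fun j => Finset.sum_erase_eq_sub (Finset.mem_univ j)
  simp_rw [h1, h2, Finset.sum_sub_distrib]
  rw [Finset.sum_comm]

private lemma quad_lower {n : ℕ} (V : Matrix (Fin n) (Fin n) ℝ) (m : ℝ)
    (hsym : V.IsSymm) (hdiag : ∀ i, V i i = ∑ j ∈ Finset.univ.erase i, V i j)
    (hlow : ∀ i j, i ≠ j → m ≤ V i j) (hm0 : 0 ≤ m) (x : Fin n → ℝ) :
    m * (((n : ℝ) - 2) * ∑ i, (x i) ^ 2) ≤ x ⬝ᵥ V.mulVec x := by
  have hVs : ∀ i j, V j i = V i j := fun i j => hsym.apply i j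
  -- step A : x ⬝ᵥ V x = ∑ i, ∑ j≠i, V i j * (x i ^ 2 + x i * x j)
  have stepA : x ⬝ᵥ V.mulVec x
      = ∑ i, ∑ j ∈ Finset.univ.erase i, V i j * (x i ^ 2 + x i * x j) := by
    unfold dotProduct Matrix.mulVec
    refine Finset.sum_congr rfl fun i _ => ?_
    have h : (dotProduct (V i) x) = V i i * x i + ∑ j ∈ Finset.univ.erase i, V i j * x j := by
      unfold dotProduct
      rw [← Finset.add_sum_erase _ _ (Finset.mem_univ i)]
    rw [h, hdiag i, Finset.sum_mul, mul_add]
    simp_rw [Finset.mul_sum]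
    rw [← Finset.sum_add_distrib]
    exact Finset.sum_congr rfl fun j _ => by ring
  have swapped : ∑ i, ∑ j ∈ Finset.univ.erase i, V i j * (x j) ^ 2
      = ∑ i, ∑ j ∈ Finset.univ.erase i, V i j * (x i) ^ 2 := by
    rw [sum_erase_comm (fun i j => V i j * (x j) ^ 2)]
    exact Finset.sum_congr rfl fun j _ => Finset.sum_congr rfl fun i _ => by rw [hVs i j]
  -- step B : 2 * (x ⬝ᵥ V x) = ∑ i, ∑ j≠i, V i j * (x i + x j)^2
  have stepB : 2 * (x ⬝ᵥ V.mulVec x)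
      = ∑ i, ∑ j ∈ Finset.univ.erase i, V i j * (x i + x j) ^ 2 := by
    have expand : ∑ i, ∑ j ∈ Finset.univ.erase i, V i j * (x i + x j) ^ 2
        = ∑ i, ∑ j ∈ Finset.univ.erase i,
            (2 * (V i j * (x i ^ 2 + x i * x j)) + (V i j * (x j) ^ 2 - V i j * (x i) ^ 2)) :=
      Finset.sum_congr rfl fun i _ => Finset.sum_congr rfl fun j _ => by ring
    rw [expand]
    simp_rw [Finset.sum_add_distrib, Finset.sum_sub_distrib]
    rw [stepA]
    simp_rw [← Finset.mul_sum]
    rw [swapped]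
    ring
  -- step C : lower bound of the symmetrized sum
  have stepC : m * (2 * ((n : ℝ) - 2) * ∑ i, (x i) ^ 2)
      ≤ ∑ i, ∑ j ∈ Finset.univ.erase i, V i j * (x i + x j) ^ 2 := by
    have h1 : ∑ i, ∑ j ∈ Finset.univ.erase i, m * (x i + x j) ^ 2
        ≤ ∑ i, ∑ j ∈ Finset.univ.erase i, V i j * (x i + x j) ^ 2 := by
      refine Finset.sum_le_sum fun i _ => Finset.sum_le_sum fun j hj => ?_
      have hij : i ≠ j := (Finset.ne_of_mem_erase hj).symm
      exact mul_le_mul_of_nonneg_right (hlow i j hij) (sq_nonneg _)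
    refine le_trans ?_ h1
    have h2 : ∀ i : Fin n, ∑ j ∈ Finset.univ.erase i, (x i + x j) ^ 2
        = (∑ j, (x i + x j) ^ 2) - (2 * x i) ^ 2 := by
      intro i
      rw [Finset.sum_erase_eq_sub (Finset.mem_univ i)]
      have : (x i + x i) ^ 2 = (2 * x i) ^ 2 := by ring
      rw [this]
    have h3 : ∀ i : Fin n, ∑ j, (x i + x j) ^ 2
        = (n : ℝ) * x i ^ 2 + 2 * x i * (∑ j, x j) + ∑ j, x j ^ 2 := by
      intro i
      have : ∀ j, (x i + x j) ^ 2 = x i ^ 2 + (2 * x i) * x j + x j ^ 2 := fun j => by ring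
      simp_rw [this, Finset.sum_add_distrib, Finset.sum_const, ← Finset.mul_sum]
      simp [Finset.card_univ]
    simp_rw [← Finset.mul_sum, h2, h3, Finset.sum_sub_distrib, Finset.sum_add_distrib,
      Finset.sum_const, ← Finset.mul_sum]
    simp only [Finset.card_univ, Fintype.card_fin, nsmul_eq_mul]
    have hsq : 0 ≤ (∑ j, x j) ^ 2 := sq_nonneg _
    have hP : (0:ℝ) ≤ ∑ i, (x i) ^ 2 := Finset.sum_nonneg fun i _ => sq_nonneg _
    have expand2 : ∑ i, (2 * x i) ^ 2 = 4 * ∑ i, x i ^ 2 := by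
      rw [Finset.mul_sum]; exact Finset.sum_congr rfl fun i _ => by ring
    rw [expand2]
    have hTT : ∑ i, 2 * x i * (∑ j, x j) = 2 * (∑ j, x j) * (∑ j, x j) := by
      rw [← Finset.sum_mul, ← Finset.mul_sum]
    rw [hTT]
    nlinarith [sq_nonneg (∑ j, x j)]
  nlinarith [stepB, stepC]


private lemma inv_entry_bound {n : ℕ} (V : Matrix (Fin n) (Fin n) ℝ)
    (hsym : V.IsSymm) (lam : ℝ) (hlam : 0 < lam)
    (hq : ∀ x : Fin n → ℝ, lam * ∑ i, (x i) ^ 2 ≤ x ⬝ᵥ V.mulVec x) :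
    IsUnit V.det ∧ (∀ i j, V⁻¹ i j = V⁻¹ j i) ∧ (∀ i j, |V⁻¹ i j| ≤ 1 / lam) := by
  have hPD : V.PosDef := by
    refine Matrix.posDef_iff_dotProduct_mulVec.mpr ⟨?_, fun x hx => ?_⟩
    · rw [Matrix.IsHermitian, conjTranspose_eq_transpose_of_trivial, hsym]
    · have hxs : ∃ i, x i ≠ 0 := by
        by_contra h
        push_neg at h
        exact hx (funext fun i => h i)
      obtain ⟨i0, hi0⟩ := hxs
      have hpos : 0 < ∑ i, (x i) ^ 2 :=
        Finset.sum_pos' (fun i _ => sq_nonneg _) ⟨i0, Finset.mem_univ i0, by positivity⟩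
      have := hq x
      simp only [star_trivial]
      nlinarith
  have hdet : IsUnit V.det := hPD.det_pos.ne'.isUnit
  have hWsym : ∀ i j, V⁻¹ i j = V⁻¹ j i := by
    intro i j
    have h : V⁻¹ᵀ = V⁻¹ := by rw [Matrix.transpose_nonsing_inv, hsym]
    calc V⁻¹ i j = V⁻¹ᵀ j i := (Matrix.transpose_apply _ _ _).symm
      _ = V⁻¹ j i := by rw [h]
  refine ⟨hdet, hWsym, ?_⟩
  have hmul : V * V⁻¹ = 1 := Matrix.mul_nonsing_inv V hdet
  have hWq : ∀ y : Fin n → ℝ,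
      0 ≤ y ⬝ᵥ V⁻¹.mulVec y ∧ y ⬝ᵥ V⁻¹.mulVec y ≤ (∑ i, (y i) ^ 2) / lam := by
    intro y
    set x := V⁻¹.mulVec y with hxdef
    have hx : V.mulVec x = y := by
      rw [hxdef, Matrix.mulVec_mulVec, hmul, Matrix.one_mulVec]
    have ht : y ⬝ᵥ x = x ⬝ᵥ V.mulVec x := by
      conv_lhs => rw [← hx]
      exact dotProduct_comm _ _
    have h2 : lam * ∑ i, (x i) ^ 2 ≤ y ⬝ᵥ x := by rw [ht]; exact hq x
    have hxP : (0:ℝ) ≤ ∑ i, (x i) ^ 2 := Finset.sum_nonneg fun i _ => sq_nonneg _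
    have hyP : (0:ℝ) ≤ ∑ i, (y i) ^ 2 := Finset.sum_nonneg fun i _ => sq_nonneg _
    have h0 : 0 ≤ y ⬝ᵥ x := le_trans (by positivity) h2
    have h3 : (y ⬝ᵥ x) ^ 2 ≤ (∑ i, (y i) ^ 2) * ∑ i, (x i) ^ 2 :=
      Finset.sum_mul_sq_le_sq_mul_sq Finset.univ y x
    refine ⟨h0, ?_⟩
    rcases eq_or_lt_of_le h0 with h | h
    · rw [← h]; positivity
    · rw [le_div_iff₀ hlam]
      nlinarith
  have hdiagW : ∀ i, 0 ≤ V⁻¹ i i ∧ V⁻¹ i i ≤ 1 / lam := by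
    intro i
    have h := hWq (Pi.single i 1)
    have hent : (Pi.single i 1 : Fin n → ℝ) ⬝ᵥ V⁻¹.mulVec (Pi.single i 1) = V⁻¹ i i := by
      simp [dotProduct, Matrix.mulVec, Pi.single_apply, ite_mul, mul_ite,
        Finset.sum_ite_eq, Finset.sum_ite_eq']
    have hsum : ∑ k, ((Pi.single i 1 : Fin n → ℝ) k) ^ 2 = 1 := by
      simp [Pi.single_apply, sq]
    rw [hent, hsum] at h
    simpa using h
  intro i j
  rcases eq_or_ne i j with rfl | hij
  · rw [abs_of_nonneg (hdiagW i).1]; exact (hdiagW i).2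
  · have key : ∀ c : ℝ, (Pi.single i 1 + Pi.single j c : Fin n → ℝ) ⬝ᵥ
        V⁻¹.mulVec (Pi.single i 1 + Pi.single j c)
        = V⁻¹ i i + c * (V⁻¹ i j + V⁻¹ j i) + c ^ 2 * V⁻¹ j j := by
      intro c
      simp [dotProduct, Matrix.mulVec, Pi.single_apply, ite_mul, mul_ite,
        Finset.sum_add_distrib, Finset.sum_ite_eq, Finset.sum_ite_eq', mul_add, add_mul,
        hij, hij.symm]
      ring
    have hsum2 : ∀ c : ℝ, ∑ k, ((Pi.single i 1 + Pi.single j c : Fin n → ℝ) k) ^ 2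
        = 1 + c ^ 2 := by
      intro c
      have hk : ∀ k : Fin n, ((Pi.single i 1 : Fin n → ℝ) k + (Pi.single j c : Fin n → ℝ) k) ^ 2
          = (if k = i then (1:ℝ) else 0) + (if k = j then c ^ 2 else 0) := by
        intro k
        simp only [Pi.single_apply]
        rcases eq_or_ne k i with rfl | hki
        · simp [hij, (show k ≠ j from hij)]
        · rcases eq_or_ne k j with rfl | hkj
          · simp only [if_neg hki, if_pos rfl, zero_add, if_true]
          · simp [hki, hkj]
      simp only [Pi.add_apply]
      simp [hk, Finset.sum_add_distrib]
    have hp := hWq (Pi.single i 1 + Pi.single j (1:ℝ))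
    have hm := hWq (Pi.single i 1 + Pi.single j (-1:ℝ))
    rw [key 1, hsum2 1] at hp
    rw [key (-1), hsum2 (-1)] at hm
    have di := hdiagW i
    have dj := hdiagW j
    rw [hWsym j i] at hp hm
    rw [abs_le]
    have h2 : (0:ℝ) < 1 / lam := by positivity
    constructor <;> nlinarith [hp.1, hp.2, hm.1, hm.2, di.1, di.2, dj.1, dj.2]



private lemma final_arith (m M N : ℝ) (hm : 0 < m) (hmM : m ≤ M) (hN : 10 ≤ N) :
    1 / (m * (N - 2)) + (N - 1) * (M ^ 2 / (m ^ 3 * (N - 2) ^ 2)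
      + M / (m ^ 2 * (N - 1) * (N - 2))) ≤ 12 * M ^ 2 / (m ^ 3 * (N - 1)) := by
  have hM : 0 < M := lt_of_lt_of_le hm hmM
  have hN1 : 0 < N - 1 := by linarith
  have hN2 : 0 < N - 2 := by linarith
  have t1 : 1 / (m * (N - 2)) ≤ 2 * M ^ 2 / (m ^ 3 * (N - 1)) := by
    rw [div_le_div_iff₀ (by positivity) (by positivity)]
    have e1 : m ^ 2 ≤ M ^ 2 := by nlinarith
    have e2 : N - 1 ≤ 2 * (N - 2) := by linarith
    nlinarith [mul_le_mul (mul_le_mul_of_nonneg_left e1 hm.le) e2 (by linarith)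
      (by positivity : (0:ℝ) ≤ m * M ^ 2)]
  have t2 : (N - 1) * (M ^ 2 / (m ^ 3 * (N - 2) ^ 2)) ≤ 2 * M ^ 2 / (m ^ 3 * (N - 1)) := by
    rw [show (N - 1) * (M ^ 2 / (m ^ 3 * (N - 2) ^ 2))
        = ((N - 1) * M ^ 2) / (m ^ 3 * (N - 2) ^ 2) by ring]
    rw [div_le_div_iff₀ (by positivity) (by positivity)]
    have e : (N - 1) ^ 2 ≤ 2 * (N - 2) ^ 2 := by nlinarith
    nlinarith [mul_le_mul_of_nonneg_left e (by positivity : (0:ℝ) ≤ m ^ 3 * M ^ 2)]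
  have t3 : (N - 1) * (M / (m ^ 2 * (N - 1) * (N - 2))) ≤ 2 * M ^ 2 / (m ^ 3 * (N - 1)) := by
    have hm0 : m ≠ 0 := hm.ne'
    have hN10 : N - 1 ≠ 0 := hN1.ne'
    have hN20 : N - 2 ≠ 0 := hN2.ne'
    rw [show (N - 1) * (M / (m ^ 2 * (N - 1) * (N - 2)))
        = M / (m ^ 2 * (N - 2)) by field_simp]
    rw [div_le_div_iff₀ (by positivity) (by positivity)]
    have e : N - 1 ≤ 2 * (N - 2) := by linarith
    nlinarith [mul_le_mul_of_nonneg_left (mul_le_mul hmM e (by linarith) hM.le)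
      (by positivity : (0:ℝ) ≤ m ^ 2 * M)]
  have hposX : (0:ℝ) < 2 * M ^ 2 / (m ^ 3 * (N - 1)) := by positivity
  calc 1 / (m * (N - 2)) + (N - 1) * (M ^ 2 / (m ^ 3 * (N - 2) ^ 2)
        + M / (m ^ 2 * (N - 1) * (N - 2)))
      = 1 / (m * (N - 2)) + ((N - 1) * (M ^ 2 / (m ^ 3 * (N - 2) ^ 2))
        + (N - 1) * (M / (m ^ 2 * (N - 1) * (N - 2)))) := by ring
    _ ≤ 2 * M ^ 2 / (m ^ 3 * (N - 1)) + (2 * M ^ 2 / (m ^ 3 * (N - 1))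
        + 2 * M ^ 2 / (m ^ 3 * (N - 1))) := add_le_add t1 (add_le_add t2 t3)
    _ ≤ 12 * M ^ 2 / (m ^ 3 * (N - 1)) := by
        rw [show (12:ℝ) * M ^ 2 / (m ^ 3 * (N - 1)) = 6 * (2 * M ^ 2 / (m ^ 3 * (N - 1))) by
          ring]
        linarith

set_option maxHeartbeats 1000000 in
private lemma row_sum_bound {n : ℕ} (hn : 10 ≤ n) (V : Matrix (Fin n) (Fin n) ℝ)
    (m M : ℝ) (hm : 0 < m) (hmM : m ≤ M)
    (hsym : V.IsSymm) (hdiag : ∀ i, V i i = ∑ j ∈ Finset.univ.erase i, V i j)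
    (hlow : ∀ i j, i ≠ j → m ≤ V i j) (hup : ∀ i j, i ≠ j → V i j ≤ M) :
    IsUnit V.det ∧ ∀ i, ∑ j, |V⁻¹ i j| ≤ 12 * M ^ 2 / (m ^ 3 * ((n : ℝ) - 1)) := by
  have hM : 0 < M := lt_of_lt_of_le hm hmM
  have hN : (10 : ℝ) ≤ (n : ℝ) := by exact_mod_cast hn
  set N : ℝ := (n : ℝ) with hNdef
  have hN2 : 0 < N - 2 := by linarith
  have hN1 : 0 < N - 1 := by linarith
  set lam : ℝ := m * (N - 2) with hlamdef
  have hlam : 0 < lam := by positivity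
  have hq : ∀ x : Fin n → ℝ, lam * ∑ i, (x i) ^ 2 ≤ x ⬝ᵥ V.mulVec x := by
    intro x
    have := quad_lower V m hsym hdiag hlow hm.le x
    calc lam * ∑ i, (x i) ^ 2 = m * ((N - 2) * ∑ i, (x i) ^ 2) := by ring
      _ ≤ _ := this
  obtain ⟨hdet, hWsym, hWent⟩ := inv_entry_bound V hsym lam hlam hq
  set B : ℝ := 1 / lam with hBdef
  have hB0 : 0 < B := by positivity
  refine ⟨hdet, fun l => ?_⟩
  set w : Fin n → ℝ := fun j => V⁻¹ j l with hwdef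
  have hwB : ∀ j, |w j| ≤ B := fun j => hWent j l
  have hmul : V * V⁻¹ = 1 := Matrix.mul_nonsing_inv V hdet
  have heq : ∀ k, ∑ j, V k j * w j = if k = l then 1 else 0 := by
    intro k
    have h := congrFun (congrFun hmul k) l
    rw [Matrix.mul_apply, Matrix.one_apply] at h
    exact h
  have hcard' : ∀ k : Fin n, ((Finset.univ.erase k).card : ℝ) = N - 1 := by
    intro k
    rw [Finset.card_erase_of_mem (Finset.mem_univ _)]
    have h1 : 1 ≤ n := by omega
    simp [Finset.card_univ]
    push_cast [Nat.cast_sub h1]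
    ring
  have hd_lo : ∀ k, m * (N - 1) ≤ V k k := by
    intro k
    rw [hdiag k]
    calc m * (N - 1) = (Finset.univ.erase k).card • m := by
          rw [nsmul_eq_mul, hcard' k]; ring
      _ = ∑ j ∈ Finset.univ.erase k, m := (Finset.sum_const m).symm
      _ ≤ ∑ j ∈ Finset.univ.erase k, V k j :=
          Finset.sum_le_sum fun j hj => hlow k j (Finset.ne_of_mem_erase hj).symm
  have hd_hi : ∀ k, V k k ≤ M * (N - 1) := by
    intro k
    rw [hdiag k]
    calc ∑ j ∈ Finset.univ.erase k, V k j ≤ ∑ j ∈ Finset.univ.erase k, M :=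
          Finset.sum_le_sum fun j hj => hup k j (Finset.ne_of_mem_erase hj).symm
      _ = (Finset.univ.erase k).card • M := Finset.sum_const M
      _ = M * (N - 1) := by rw [nsmul_eq_mul, hcard' k]; ring
  have hd_pos : ∀ k, 0 < V k k := fun k => lt_of_lt_of_le (by positivity) (hd_lo k)
  set p : Fin n → Fin n → ℝ := fun k j => V k j / V k k with hpdef
  set δ₀ : ℝ := m / (M * (N - 1)) with hδdef
  set κ : ℝ := M / (m * (N - 1)) with hκdef
  have hδ0 : 0 < δ₀ := by positivity
  have hκ0 : 0 < κ := by positivity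
  have hp_nonneg : ∀ k j, j ≠ k → 0 ≤ p k j := fun k j hjk =>
    div_nonneg (le_trans hm.le (hlow k j hjk.symm)) (hd_pos k).le
  have hp_lo : ∀ k j, j ≠ k → δ₀ ≤ p k j := by
    intro k j hjk
    exact div_le_div₀ (le_trans hm.le (hlow k j hjk.symm)) (hlow k j hjk.symm) (hd_pos k) (hd_hi k)
  have hp_hi : ∀ k j, j ≠ k → p k j ≤ κ := by
    intro k j hjk
    exact div_le_div₀ hM.le (hup k j hjk.symm) (by positivity) (hd_lo k)
  have hp_sum : ∀ k, ∑ j ∈ Finset.univ.erase k, p k j = 1 := by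
    intro k
    rw [hpdef]
    rw [← Finset.sum_div, ← hdiag k, div_self (hd_pos k).ne']
  have hrec : ∀ k, k ≠ l → w k = -∑ j ∈ Finset.univ.erase k, p k j * w j := by
    intro k hkl
    have h0 : V k k * w k + ∑ j ∈ Finset.univ.erase k, V k j * w j = 0 := by
      rw [Finset.add_sum_erase _ (fun j => V k j * w j) (Finset.mem_univ k), heq k, if_neg hkl]
    have h1 : ∑ j ∈ Finset.univ.erase k, p k j * w j
        = (∑ j ∈ Finset.univ.erase k, V k j * w j) / V k k := by
      rw [Finset.sum_div]
      exact Finset.sum_congr rfl fun j _ => by rw [hpdef]; ring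
    rw [h1, neg_div' ]
    rw [eq_div_iff (hd_pos k).ne']
    linarith [h0]
  -- extrema over indices different from l
  have he : (Finset.univ.erase l).Nonempty := by
    rw [← Finset.card_pos, Finset.card_erase_of_mem (Finset.mem_univ l)]
    simp [Finset.card_univ]
    omega
  set S : ℝ := (Finset.univ.erase l).sup' he w with hSdef
  set s : ℝ := (Finset.univ.erase l).inf' he w with hsdef
  obtain ⟨kS, hkSmem, hSval⟩ := Finset.exists_mem_eq_sup' he w
  obtain ⟨kI, hkImem, hsval⟩ := Finset.exists_mem_eq_inf' he w
  rw [← hSdef] at hSval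
  rw [← hsdef] at hsval
  have hkSl : kS ≠ l := (Finset.mem_erase.mp hkSmem).1
  have hkIl : kI ≠ l := (Finset.mem_erase.mp hkImem).1
  have hle_S : ∀ j, j ≠ l → w j ≤ S := fun j hj =>
    Finset.le_sup' w (Finset.mem_erase.mpr ⟨hj, Finset.mem_univ j⟩)
  have hs_le : ∀ j, j ≠ l → s ≤ w j := fun j hj =>
    Finset.inf'_le w (Finset.mem_erase.mpr ⟨hj, Finset.mem_univ j⟩)
  have hSs : s ≤ S := le_trans (hs_le kS hkSl) (le_of_eq hSval.symm)
  have hSB : |S| ≤ B := by rw [hSval]; exact hwB kS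
  have hsB : |s| ≤ B := by rw [hsval]; exact hwB kI
  have hSB' := abs_le.mp hSB
  have hsB' := abs_le.mp hsB
  have hwlB := abs_le.mp (hwB l)
  -- splitting the recursion at index l
  have hsplit : ∀ k, k ≠ l → ∑ j ∈ Finset.univ.erase k, p k j * w j
      = p k l * w l + ∑ j ∈ (Finset.univ.erase k).erase l, p k j * w j := by
    intro k hkl
    rw [Finset.add_sum_erase _ (fun j => p k j * w j)
      (Finset.mem_erase.mpr ⟨hkl.symm, Finset.mem_univ l⟩)]
  have hsum_split : ∀ k, k ≠ l → ∑ j ∈ (Finset.univ.erase k).erase l, p k j = 1 - p k l := by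
    intro k hkl
    rw [Finset.sum_erase_eq_sub (Finset.mem_erase.mpr ⟨hkl.symm, Finset.mem_univ l⟩), hp_sum k]
  -- Claim A : |S + s| ≤ 2 κ B
  have claimA : |S + s| ≤ 2 * κ * B := by
    have upper : S + s ≤ 2 * κ * B := by
      have h1 : S = -(p kS l * w l + ∑ j ∈ (Finset.univ.erase kS).erase l, p kS j * w j) := by
        rw [hSval, hrec kS hkSl, hsplit kS hkSl]
      have h2 : (1 - p kS l) * s ≤ ∑ j ∈ (Finset.univ.erase kS).erase l, p kS j * w j := by
        calc (1 - p kS l) * s = ∑ j ∈ (Finset.univ.erase kS).erase l, p kS j * s := by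
              rw [← Finset.sum_mul, hsum_split kS hkSl]
          _ ≤ _ := Finset.sum_le_sum fun j hj => by
              have hjl : j ≠ l := (Finset.mem_erase.mp hj).1
              have hjkS : j ≠ kS := (Finset.mem_erase.mp (Finset.mem_erase.mp hj).2).1
              exact mul_le_mul_of_nonneg_left (hs_le j hjl) (hp_nonneg kS j hjkS)
      have hpl0 : 0 ≤ p kS l := hp_nonneg kS l (Ne.symm hkSl)
      have hplκ : p kS l ≤ κ := hp_hi kS l (Ne.symm hkSl)
      have e1 : 0 ≤ p kS l * (2 * B - (s - w l)) :=
        mul_nonneg hpl0 (by linarith)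
      have e2 : 0 ≤ (κ - p kS l) * (2 * B) :=
        mul_nonneg (by linarith) (by linarith)
      nlinarith [h1, h2]
    have lower : -(2 * κ * B) ≤ S + s := by
      have h1 : s = -(p kI l * w l + ∑ j ∈ (Finset.univ.erase kI).erase l, p kI j * w j) := by
        rw [hsval, hrec kI hkIl, hsplit kI hkIl]
      have h2 : ∑ j ∈ (Finset.univ.erase kI).erase l, p kI j * w j ≤ (1 - p kI l) * S := by
        calc ∑ j ∈ (Finset.univ.erase kI).erase l, p kI j * w j
            ≤ ∑ j ∈ (Finset.univ.erase kI).erase l, p kI j * S := Finset.sum_le_sum fun j hj => by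
              have hjl : j ≠ l := (Finset.mem_erase.mp hj).1
              have hjkI : j ≠ kI := (Finset.mem_erase.mp (Finset.mem_erase.mp hj).2).1
              exact mul_le_mul_of_nonneg_left (hle_S j hjl) (hp_nonneg kI j hjkI)
          _ = (1 - p kI l) * S := by rw [← Finset.sum_mul, hsum_split kI hkIl]
      have hpl0 : 0 ≤ p kI l := hp_nonneg kI l (Ne.symm hkIl)
      have hplκ : p kI l ≤ κ := hp_hi kI l (Ne.symm hkIl)
      have e1 : 0 ≤ p kI l * (2 * B + (S - w l)) := mul_nonneg hpl0 (by linarith)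
      have e2 : 0 ≤ (κ - p kI l) * (2 * B) := mul_nonneg (by linarith) (by linarith)
      nlinarith [h1, h2]
    rw [abs_le]
    exact ⟨lower, upper⟩
  -- Claim B : oscillation bound
  have claimB : S - s ≤ 2 * (κ * B / ((N - 2) * δ₀)) := by
    rcases eq_or_ne kS kI with heqk | hnek
    · have : S = s := by rw [hSval, hsval, heqk]
      rw [this, sub_self]
      positivity
    · -- rewrite the recursions as sums over univ
      set g : Fin n → Fin n → ℝ := fun k j => if j = k then 0 else p k j with hgdef
      have hgkk : ∀ k, g k k = 0 := fun k => by simp [hgdef]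
      have hgne : ∀ k j, j ≠ k → g k j = p k j := fun k j h => by simp [hgdef, h]
      have hg_nonneg : ∀ k j, 0 ≤ g k j := by
        intro k j
        rcases eq_or_ne j k with rfl | h
        · rw [hgkk]
        · rw [hgne k j h]; exact hp_nonneg k j h
      have hg_hi : ∀ k j, g k j ≤ κ := by
        intro k j
        rcases eq_or_ne j k with rfl | h
        · rw [hgkk]; exact hκ0.le
        · rw [hgne k j h]; exact hp_hi k j h
      have hg_eq : ∀ k, ∑ j, g k j * w j = ∑ j ∈ Finset.univ.erase k, p k j * w j := by
        intro k
        rw [← Finset.add_sum_erase _ (fun j => g k j * w j) (Finset.mem_univ k), hgkk k,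
          zero_mul, zero_add]
        exact Finset.sum_congr rfl fun j hj => by rw [hgne k j (Finset.mem_erase.mp hj).1]
      have hg_sum : ∀ k, ∑ j, g k j = 1 := by
        intro k
        rw [← Finset.add_sum_erase _ (g k) (Finset.mem_univ k), hgkk k, zero_add]
        rw [show ∑ j ∈ Finset.univ.erase k, g k j = ∑ j ∈ Finset.univ.erase k, p k j from
          Finset.sum_congr rfl fun j hj => by rw [hgne k j (Finset.mem_erase.mp hj).1]]
        exact hp_sum k
      set c : Fin n → ℝ := fun j => g kS j - g kI j with hcdef
      have hcj : ∀ j, c j = g kS j - g kI j := fun j => by simp [hcdef]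
      set μ : ℝ := (S + s) / 2 with hμdef
      have hc0 : ∑ j, c j = 0 := by
        have h : ∑ j, c j = (∑ j, g kS j) - ∑ j, g kI j := by
          rw [← Finset.sum_sub_distrib]
        rw [h, hg_sum kS, hg_sum kI, sub_self]
      have hgwS : ∑ j, g kS j * w j = -S := by
        rw [hg_eq kS, hSval]
        linarith [hrec kS hkSl]
      have hgwI : ∑ j, g kI j * w j = -s := by
        rw [hg_eq kI, hsval]
        linarith [hrec kI hkIl]
      have hceq : S - s = ∑ j, c j * (μ - w j) := by
        have h1 : ∑ j, c j * (μ - w j) = μ * (∑ j, c j) - ∑ j, c j * w j := by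
          rw [Finset.mul_sum, ← Finset.sum_sub_distrib]
          exact Finset.sum_congr rfl fun j _ => by ring
        have h2 : ∑ j, c j * w j = (∑ j, g kS j * w j) - ∑ j, g kI j * w j := by
          rw [← Finset.sum_sub_distrib]
          exact Finset.sum_congr rfl fun j _ => by rw [hcj j]; ring
        rw [h1, hc0, h2, hgwS, hgwI]
        ring
      have habs : S - s ≤ ∑ j, |c j| * |μ - w j| := by
        rw [hceq]
        calc ∑ j, c j * (μ - w j) ≤ |∑ j, c j * (μ - w j)| := le_abs_self _
          _ ≤ ∑ j, |c j * (μ - w j)| := Finset.abs_sum_le_sum_abs _ _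
          _ = ∑ j, |c j| * |μ - w j| := Finset.sum_congr rfl fun j _ => abs_mul _ _
      have hsplitl : ∑ j, |c j| * |μ - w j|
          = |c l| * |μ - w l| + ∑ j ∈ Finset.univ.erase l, |c j| * |μ - w j| :=
        (Finset.add_sum_erase _ (fun j => |c j| * |μ - w j|) (Finset.mem_univ l)).symm
      have hcl : |c l| ≤ κ := by
        rw [hcj l]
        rw [abs_le]
        constructor
        · have := hg_hi kI l
          have := hg_nonneg kS l
          linarith
        · have := hg_hi kS l
          have := hg_nonneg kI l
          linarith
      have hμwl : |μ - w l| ≤ 2 * B := by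
        rw [abs_le, hμdef]
        constructor <;> [linarith [hSB'.1, hsB'.1, hwlB.2]; linarith [hSB'.2, hsB'.2, hwlB.1]]
      -- pointwise bound for |c j| and summation
      have hcbound : ∀ j, |c j| ≤ (g kS j + g kI j)
          - (if j = kS ∨ j = kI then 0 else 2 * δ₀) := by
        intro j
        by_cases hjS : j = kS
        · subst hjS
          rw [if_pos (Or.inl rfl), hcj j, hgkk j, zero_sub, abs_neg,
            abs_of_nonneg (hg_nonneg kI j), zero_add]
          linarith [hg_nonneg kI j]
        · by_cases hjI : j = kI
          · subst hjI
            rw [if_pos (Or.inr rfl), hcj j, hgkk j, sub_zero,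
              abs_of_nonneg (hg_nonneg kS j), add_zero]
            linarith [hg_nonneg kS j]
          · rw [if_neg (by push_neg; exact ⟨hjS, hjI⟩), hcj j, hgne kS j hjS, hgne kI j hjI,
              abs_le]
            constructor
            · linarith [hp_lo kS j hjS, hp_hi kI j hjI, hp_lo kI j hjI]
            · linarith [hp_lo kI j hjI, hp_hi kS j hjS, hp_lo kS j hjS]
      have hite_sum : ∑ j : Fin n, (if j = kS ∨ j = kI then 0 else 2 * δ₀)
          = 2 * δ₀ * (N - 2) := by
        have hpoint : ∀ j : Fin n, (if j = kS ∨ j = kI then (0:ℝ) else 2 * δ₀)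
            = 2 * δ₀ - ((if j = kS then 2 * δ₀ else 0) + (if j = kI then 2 * δ₀ else 0)) := by
          intro j
          by_cases hjS : j = kS
          · subst hjS
            rw [if_pos (Or.inl rfl), if_pos rfl, if_neg hnek]
            ring
          · by_cases hjI : j = kI
            · subst hjI
              rw [if_pos (Or.inr rfl), if_neg hjS, if_pos rfl]; ring
            · rw [if_neg (by push_neg; exact ⟨hjS, hjI⟩), if_neg hjS, if_neg hjI]; ring
        rw [Finset.sum_congr rfl fun j _ => hpoint j, Finset.sum_sub_distrib,
          Finset.sum_add_distrib, Finset.sum_ite_eq' Finset.univ kS (fun _ => 2 * δ₀),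
          Finset.sum_ite_eq' Finset.univ kI (fun _ => 2 * δ₀), if_pos (Finset.mem_univ _),
          if_pos (Finset.mem_univ _), Finset.sum_const, Finset.card_univ, nsmul_eq_mul]
        rw [Fintype.card_fin]
        rw [show ((n:ℝ)) = N from hNdef.symm]
        ring
      have hcsum : ∑ j, |c j| ≤ 2 - 2 * δ₀ * (N - 2) := by
        calc ∑ j, |c j| ≤ ∑ j : Fin n, ((g kS j + g kI j)
            - (if j = kS ∨ j = kI then 0 else 2 * δ₀)) := Finset.sum_le_sum fun j _ => hcbound j
          _ = (∑ j, g kS j) + (∑ j, g kI j)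
              - ∑ j : Fin n, (if j = kS ∨ j = kI then (0:ℝ) else 2 * δ₀) := by
            rw [Finset.sum_sub_distrib, Finset.sum_add_distrib]
          _ = 2 - 2 * δ₀ * (N - 2) := by rw [hg_sum kS, hg_sum kI, hite_sum]; ring
      have hcsum_l : ∑ j ∈ Finset.univ.erase l, |c j| ≤ 2 - 2 * δ₀ * (N - 2) := by
        refine le_trans (Finset.sum_le_sum_of_subset_of_nonneg (Finset.subset_univ _)
          fun j _ _ => abs_nonneg _) hcsum
      have hterm : ∀ j ∈ Finset.univ.erase l, |c j| * |μ - w j| ≤ |c j| * ((S - s) / 2) := by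
        intro j hj
        have hjl : j ≠ l := (Finset.mem_erase.mp hj).1
        refine mul_le_mul_of_nonneg_left ?_ (abs_nonneg _)
        rw [abs_le, hμdef]
        constructor
        · linarith [hle_S j hjl]
        · linarith [hs_le j hjl]
      have hΩ : S - s ≤ κ * (2 * B) + (2 - 2 * δ₀ * (N - 2)) * ((S - s) / 2) := by
        calc S - s ≤ ∑ j, |c j| * |μ - w j| := habs
          _ = |c l| * |μ - w l| + ∑ j ∈ Finset.univ.erase l, |c j| * |μ - w j| := hsplitl
          _ ≤ κ * (2 * B) + ∑ j ∈ Finset.univ.erase l, |c j| * ((S - s) / 2) := by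
            refine add_le_add ?_ (Finset.sum_le_sum hterm)
            exact mul_le_mul hcl hμwl (abs_nonneg _) hκ0.le
          _ ≤ κ * (2 * B) + (2 - 2 * δ₀ * (N - 2)) * ((S - s) / 2) := by
            rw [← Finset.sum_mul]
            exact add_le_add le_rfl (mul_le_mul_of_nonneg_right hcsum_l (by linarith : (0:ℝ) ≤ (S - s) / 2))
      have hpos : 0 < (N - 2) * δ₀ := by positivity
      rw [show 2 * (κ * B / ((N - 2) * δ₀)) = 2 * κ * B / ((N - 2) * δ₀) by ring,
        le_div_iff₀ hpos]
      nlinarith [hΩ]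
  -- conclusion : bound each entry and sum
  have hoff : ∀ k, k ≠ l → |w k| ≤ κ * B / ((N - 2) * δ₀) + κ * B := by
    intro k hkl
    have h1 := hle_S k hkl
    have h2 := hs_le k hkl
    have hA := abs_le.mp claimA
    rw [abs_le]
    constructor
    · linarith [claimB, hA.1]
    · linarith [claimB, hA.2]
  have hrow : ∑ j, |V⁻¹ l j| = ∑ j, |w j| := by
    refine Finset.sum_congr rfl fun j _ => by rw [hWsym l j]
  have hrow2 : ∑ j, |w j| ≤ B + (N - 1) * (κ * B / ((N - 2) * δ₀) + κ * B) := by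
    rw [← Finset.add_sum_erase _ (fun j => |w j|) (Finset.mem_univ l)]
    refine add_le_add (hwB l) ?_
    calc ∑ j ∈ Finset.univ.erase l, |w j|
        ≤ ∑ j ∈ Finset.univ.erase l, (κ * B / ((N - 2) * δ₀) + κ * B) :=
          Finset.sum_le_sum fun j hj => hoff j (Finset.mem_erase.mp hj).1
      _ = (N - 1) * (κ * B / ((N - 2) * δ₀) + κ * B) := by
          rw [Finset.sum_const, nsmul_eq_mul, hcard' l]
  rw [hrow]
  refine le_trans hrow2 ?_
  -- final arithmetic
  have hm0 : m ≠ 0 := hm.ne'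
  have hM0 : M ≠ 0 := hM.ne'
  have hN10 : N - 1 ≠ 0 := hN1.ne'
  have hN20 : N - 2 ≠ 0 := hN2.ne'
  have hBval : B = 1 / (m * (N - 2)) := by rw [hBdef, hlamdef]
  have hκB : κ * B = M / (m ^ 2 * (N - 1) * (N - 2)) := by
    rw [hκdef, hBval, div_mul_div_comm, mul_one,
      show (m * (N - 1)) * (m * (N - 2)) = m ^ 2 * (N - 1) * (N - 2) by ring]
  have hexp : κ * B / ((N - 2) * δ₀) = M ^ 2 / (m ^ 3 * (N - 2) ^ 2) := by
    rw [hκB, div_div, hδdef,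
      show m ^ 2 * (N - 1) * (N - 2) * ((N - 2) * (m / (M * (N - 1))))
        = m ^ 3 * (N - 2) ^ 2 / M by field_simp,
      div_div_eq_mul_div, show M * M = M ^ 2 by ring]
  rw [hexp, hκB, hBval]
  exact final_arith m M N hm hmM hN

/-- There is a constant `c₂` (independent of `e^{Q_n}` and `n`) such that for all
sufficiently large `n`, every `V ∈ L_n((2(1+e^{Q_n}))⁻¹, q²/2)` is invertible and the maximum
absolute row sum norm of the inverse satisfies `‖V⁻¹‖_∞ ≤ c₂ (1+e^{Q_n})³/(n-1)`. -/
theorem inverse_row_sum_norm_bound (q : ℕ) (hq : 2 ≤ q) :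
    ∃ c₂ : ℝ, 0 < c₂ ∧ ∃ N : ℕ, ∀ n : ℕ, N ≤ n →
      ∀ Q : ℝ, 0 < Q →
      ∀ V : Matrix (Fin n) (Fin n) ℝ,
        MatrixClassL n (2 * (1 + Real.exp Q))⁻¹ ((q : ℝ) ^ 2 / 2) V →
        IsUnit V.det ∧
        ∀ i : Fin n, ∑ j, |V⁻¹ i j| ≤ c₂ * (1 + Real.exp Q) ^ 3 / ((n : ℝ) - 1) := by
  have hq2 : (2:ℝ) ≤ (q:ℝ) := by exact_mod_cast hq
  have hqpos : (0:ℝ) < (q:ℝ) := by linarith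
  refine ⟨24 * (q:ℝ) ^ 4, by positivity, 10, ?_⟩
  intro n hn Q hQ V hV
  obtain ⟨hsym, hdiag, hbound⟩ := hV
  have hE : (0:ℝ) < Real.exp Q := Real.exp_pos Q
  have hE1 : (1:ℝ) ≤ Real.exp Q := Real.one_le_exp hQ.le
  set m : ℝ := (2 * (1 + Real.exp Q))⁻¹ with hmdef
  set M : ℝ := (q:ℝ) ^ 2 / 2 with hMdef
  have hm : 0 < m := by rw [hmdef]; positivity
  have hM2 : (2:ℝ) ≤ M := by rw [hMdef]; nlinarith
  have hmhalf : m ≤ 1 / 2 := by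
    rw [hmdef, show (1:ℝ)/2 = (2:ℝ)⁻¹ by norm_num]
    apply inv_anti₀ (by norm_num)
    nlinarith
  have hmM : m ≤ M := by linarith
  have hlow : ∀ i j, i ≠ j → m ≤ V i j := fun i j h => (hbound i j h).1
  have hup : ∀ i j, i ≠ j → V i j ≤ M := fun i j h => (hbound i j h).2
  obtain ⟨hdet, hrow⟩ := row_sum_bound hn V m M hm hmM hsym hdiag hlow hup
  refine ⟨hdet, fun i => le_trans (hrow i) (le_of_eq ?_)⟩
  have hn1 : (0:ℝ) < (n:ℝ) - 1 := by
    have : (10:ℝ) ≤ (n:ℝ) := by exact_mod_cast hn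
    linarith
  rw [hmdef, hMdef]
  have h2E : (2 * (1 + Real.exp Q)) ≠ 0 := by positivity
  field_simp
  ring
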